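/- Let A be a unital C*-algebra in which the invertible elements are dense. Let a be a 2-by-2 matrix with entries in A and let \varepsilon > 0. Then there exists a norm-continuous path t \mapsto v(t), t in [0,1], of unitary 2-by-2 matrices over A with v(0) = 1 such that the (2,1) entry of the product v(1) \cdot a has norm strictly less than \varepsilon. -/

import Mathlib

section aux

variable {A : Type*} [CStarAlgebra A]

/-- `(1 + t²a)^{-1/2}` via continuous functional calculus. -/
noncomputable def invSqrtAux (a : A) (t : ℝ) : A :=
  cfc (fun s : ℝ => Real.sqrt (1 + t ^ 2 * s)⁻¹) a

variable {a : A}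

/-- Spectrum-nonnegativity hypothesis, usable without an order on `A`. -/
def SpecNN (a : A) : Prop := ∀ s ∈ spectrum ℝ a, 0 ≤ s

lemma invSqrtAux_pos (ha0 : SpecNN a) (t : ℝ) {s : ℝ} (hs : s ∈ spectrum ℝ a) :
    0 < 1 + t ^ 2 * s := by
  have h1 : (0:ℝ) ≤ s := ha0 s hs
  positivity

lemma invSqrtAux_contOn (ha0 : SpecNN a) (t : ℝ) :
    ContinuousOn (fun s : ℝ => Real.sqrt (1 + t ^ 2 * s)⁻¹) (spectrum ℝ a) := by
  apply Real.continuous_sqrt.comp_continuousOn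
  apply ContinuousOn.inv₀
  · fun_prop
  · exact fun s hs => (invSqrtAux_pos ha0 t hs).ne'

lemma invSqrtAux_inv_contOn (ha0 : SpecNN a) (t : ℝ) :
    ContinuousOn (fun s : ℝ => (1 + t ^ 2 * s)⁻¹) (spectrum ℝ a) := by
  apply ContinuousOn.inv₀
  · fun_prop
  · exact fun s hs => (invSqrtAux_pos ha0 t hs).ne'

lemma invSqrtAux_isSelfAdjoint (t : ℝ) : IsSelfAdjoint (invSqrtAux a t) :=
  cfc_predicate _ a

lemma invSqrtAux_mul_self (ha0 : SpecNN a) (t : ℝ) :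
    invSqrtAux a t * invSqrtAux a t = cfc (fun s : ℝ => (1 + t ^ 2 * s)⁻¹) a := by
  rw [invSqrtAux, ← cfc_mul _ _ a (invSqrtAux_contOn ha0 t) (invSqrtAux_contOn ha0 t)]
  exact cfc_congr fun s hs =>
    Real.mul_self_sqrt (inv_nonneg.mpr (invSqrtAux_pos ha0 t hs).le)

lemma one_add_smul_eq_cfc (ha : IsSelfAdjoint a) (t : ℝ) :
    cfc (fun s : ℝ => 1 + t ^ 2 * s) a = 1 + t ^ 2 • a := by
  rw [cfc_const_add 1 (fun s => t ^ 2 * s) a (by fun_prop) ha, map_one,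
    cfc_const_mul_id (t ^ 2) a ha]

lemma invSqrtAux_sq_mul (ha : IsSelfAdjoint a) (ha0 : SpecNN a) (t : ℝ) :
    invSqrtAux a t * invSqrtAux a t * (1 + t ^ 2 • a) = 1 := by
  rw [invSqrtAux_mul_self ha0 t, ← one_add_smul_eq_cfc ha t,
    ← cfc_mul _ _ a (invSqrtAux_inv_contOn ha0 t) (by fun_prop)]
  calc cfc (fun s : ℝ => (1 + t ^ 2 * s)⁻¹ * (1 + t ^ 2 * s)) a
      = cfc (fun _ : ℝ => (1:ℝ)) a :=
        cfc_congr fun s hs => inv_mul_cancel₀ (invSqrtAux_pos ha0 t hs).ne'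
    _ = 1 := cfc_const_one ℝ a ha

lemma invSqrtAux_mul_sq (ha : IsSelfAdjoint a) (ha0 : SpecNN a) (t : ℝ) :
    (1 + t ^ 2 • a) * (invSqrtAux a t * invSqrtAux a t) = 1 := by
  rw [invSqrtAux_mul_self ha0 t, ← one_add_smul_eq_cfc ha t,
    ← cfc_mul _ _ a (by fun_prop) (invSqrtAux_inv_contOn ha0 t)]
  calc cfc (fun s : ℝ => (1 + t ^ 2 * s) * (1 + t ^ 2 * s)⁻¹) a
      = cfc (fun _ : ℝ => (1:ℝ)) a :=
        cfc_congr fun s hs => mul_inv_cancel₀ (invSqrtAux_pos ha0 t hs).ne'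
    _ = 1 := cfc_const_one ℝ a ha

lemma invSqrtAux_comm (ha : IsSelfAdjoint a) (t : ℝ) :
    invSqrtAux a t * a = a * invSqrtAux a t := by
  have h := cfc_commute_cfc (fun s : ℝ => Real.sqrt (1 + t ^ 2 * s)⁻¹) (id : ℝ → ℝ) a
  rw [cfc_id ℝ a ha] at h
  exact h.eq

lemma invSqrtAux_zero (ha : IsSelfAdjoint a) : invSqrtAux a 0 = 1 := by
  rw [invSqrtAux, show (fun s : ℝ => Real.sqrt (1 + (0:ℝ) ^ 2 * s)⁻¹) = fun _ : ℝ => (1:ℝ) from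
    funext fun s => by norm_num]
  exact cfc_const_one ℝ a ha

lemma invSqrtAux_continuous (ha : IsSelfAdjoint a) (ha0 : SpecNN a) :
    Continuous fun t : ℝ => invSqrtAux a t := by
  let F : C(ℝ × spectrum ℝ a, ℝ) :=
    ⟨fun q => Real.sqrt (1 + q.1 ^ 2 * (q.2 : ℝ))⁻¹, by
      apply Real.continuous_sqrt.comp
      apply Continuous.inv₀
      · fun_prop
      · rintro ⟨t, s, hs⟩
        exact (invSqrtAux_pos ha0 t hs).ne'⟩
  have key : ∀ t : ℝ, invSqrtAux a t = cfcHom ha (F.curry t) := by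
    intro t
    rw [invSqrtAux, cfc_apply _ a ha (invSqrtAux_contOn ha0 t)]
    rfl
  simp only [funext key]
  exact (cfcHom_isClosedEmbedding ha).continuous.comp F.curry.continuous

lemma invSqrtAux_norm_mul_le (x : A) :
    ‖invSqrtAux (x * star x) 1 * x‖ ≤ 1 := by
  set h := x * star x with hh
  have hsa : IsSelfAdjoint h := IsSelfAdjoint.mul_star_self x
  have h0 : SpecNN h := by
    have := spectrum_star_mul_self_nonneg (b := star x)
    rwa [star_star] at this
  set q := invSqrtAux h 1 with hq
  have hqsa : IsSelfAdjoint q := invSqrtAux_isSelfAdjoint 1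
  have key : q * h * q = cfc (fun s : ℝ => s * (1 + s)⁻¹) h := by
    have e1 : q * h = cfc (fun s : ℝ => Real.sqrt (1 + 1 ^ 2 * s)⁻¹ * s) h := by
      rw [cfc_mul _ _ h (invSqrtAux_contOn h0 1) (by fun_prop)]
      rw [cfc_id' ℝ h hsa]
      rfl
    rw [e1, hq, invSqrtAux, ← cfc_mul _ _ h
      (show ContinuousOn (fun s : ℝ => Real.sqrt (1 + 1 ^ 2 * s)⁻¹ * s) (spectrum ℝ h) from
        (invSqrtAux_contOn h0 1).mul continuousOn_id) (invSqrtAux_contOn h0 1)]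
    refine cfc_congr fun s hs => ?_
    have hs0 : (0:ℝ) ≤ s := h0 s hs
    have hpos : (0:ℝ) < 1 + 1 ^ 2 * s := invSqrtAux_pos h0 1 hs
    have : Real.sqrt (1 + 1 ^ 2 * s)⁻¹ * Real.sqrt (1 + 1 ^ 2 * s)⁻¹
        = (1 + 1 ^ 2 * s)⁻¹ := Real.mul_self_sqrt (inv_nonneg.mpr hpos.le)
    calc Real.sqrt (1 + 1 ^ 2 * s)⁻¹ * s * Real.sqrt (1 + 1 ^ 2 * s)⁻¹
        = s * (Real.sqrt (1 + 1 ^ 2 * s)⁻¹ * Real.sqrt (1 + 1 ^ 2 * s)⁻¹) := by ring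
      _ = s * (1 + s)⁻¹ := by rw [this]; norm_num
  have hbound : ‖q * h * q‖ ≤ 1 := by
    rw [key]
    refine norm_cfc_le zero_le_one fun s hs => ?_
    have hs0 : (0:ℝ) ≤ s := h0 s hs
    have h1 : (0:ℝ) < 1 + s := by linarith
    rw [Real.norm_eq_abs, abs_of_nonneg (by positivity)]
    calc s * (1 + s)⁻¹ ≤ (1 + s) * (1 + s)⁻¹ := by
          apply mul_le_mul_of_nonneg_right (by linarith) (by positivity)
      _ = 1 := mul_inv_cancel₀ h1.ne'
  have hsq : ‖q * x‖ * ‖q * x‖ = ‖q * h * q‖ := by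
    rw [← CStarRing.norm_self_mul_star (x := q * x)]
    congr 1
    rw [star_mul, hqsa.star_eq, hh]
    noncomm_ring
  nlinarith [norm_nonneg (q * x)]

end aux

/-- (Making matrices almost upper triangular.) Let `A` be a unital C*-algebra in which
the invertible elements are dense. For every 2×2 matrix `a` over `A` and every `ε > 0`
there is a norm-continuous path `t ↦ v(t)` of unitaries of `M₂(A)` with `v(0) = 1`
such that the `(2,1)` entry of `v(1) * a` has norm `< ε`. -/
theorem exists_unitary_path_triangularize
    {A : Type*} [CStarAlgebra A]
    (hTSR1 : ∀ a : A, ∀ ε > (0:ℝ), ∃ b : A, IsUnit b ∧ ‖a - b‖ < ε)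
    (a : Matrix (Fin 2) (Fin 2) A) (ε : ℝ) (hε : 0 < ε) :
    ∃ v : ℝ → Matrix (Fin 2) (Fin 2) A,
      ContinuousOn v (Set.Icc 0 1) ∧
      v 0 = 1 ∧
      (∀ t ∈ Set.Icc (0:ℝ) 1, star (v t) * v t = 1 ∧ v t * star (v t) = 1) ∧
      ‖(v 1 * a) 1 0‖ < ε := by
  obtain ⟨b, hbu, hab⟩ := hTSR1 (a 0 0) ε hε
  obtain ⟨u, rfl⟩ := hbu
  set x : A := -(a 1 0 * ↑u⁻¹) with hxdef
  set k : A := star x * x with hkdef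
  set h : A := x * star x with hhdef
  have hksa : IsSelfAdjoint k := IsSelfAdjoint.star_mul_self x
  have hhsa : IsSelfAdjoint h := IsSelfAdjoint.mul_star_self x
  have hk0 : SpecNN k := spectrum_star_mul_self_nonneg
  have hh0 : SpecNN h := by
    have := spectrum_star_mul_self_nonneg (b := star x); rwa [star_star] at this
  set p : ℝ → A := invSqrtAux k with hpdef
  set q : ℝ → A := invSqrtAux h with hqdef
  have hpsa : ∀ t, IsSelfAdjoint (p t) := fun t => invSqrtAux_isSelfAdjoint t
  have hqsa : ∀ t, IsSelfAdjoint (q t) := fun t => invSqrtAux_isSelfAdjoint t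
  have hP1 : ∀ t : ℝ, p t * p t * (1 + t ^ 2 • k) = 1 := fun t => invSqrtAux_sq_mul hksa hk0 t
  have hP2 : ∀ t : ℝ, (1 + t ^ 2 • k) * (p t * p t) = 1 := fun t => invSqrtAux_mul_sq hksa hk0 t
  have hQ1 : ∀ t : ℝ, q t * q t * (1 + t ^ 2 • h) = 1 := fun t => invSqrtAux_sq_mul hhsa hh0 t
  have hQ2 : ∀ t : ℝ, (1 + t ^ 2 • h) * (q t * q t) = 1 := fun t => invSqrtAux_mul_sq hhsa hh0 t
  have hpk : ∀ t : ℝ, p t * k = k * p t := fun t => invSqrtAux_comm hksa t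
  have hqh : ∀ t : ℝ, q t * h = h * q t := fun t => invSqrtAux_comm hhsa t
  have hcomm : ∀ t : ℝ, (1 + t ^ 2 • h) * x = x * (1 + t ^ 2 • k) := by
    intro t
    have hx1 : h * x = x * k := by rw [hhdef, hkdef, mul_assoc]
    rw [add_mul, mul_add, one_mul, mul_one, smul_mul_assoc, mul_smul_comm, hx1]
  have hxP : ∀ t : ℝ, x * (p t * p t) = q t * q t * x := by
    intro t
    conv_lhs => rw [← one_mul (x * (p t * p t)), ← hQ1 t]
    rw [mul_assoc (q t * q t), ← mul_assoc (1 + t ^ 2 • h), hcomm t,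
      mul_assoc x, hP2 t, mul_one]
  have hcomm' : ∀ t : ℝ, (1 + t ^ 2 • k) * star x = star x * (1 + t ^ 2 • h) := by
    intro t
    have hx1 : k * star x = star x * h := by rw [hhdef, hkdef, mul_assoc]
    rw [add_mul, mul_add, one_mul, mul_one, smul_mul_assoc, mul_smul_comm, hx1]
  have hxPstar : ∀ t : ℝ, star x * (q t * q t) = p t * p t * star x := by
    intro t
    conv_lhs => rw [← one_mul (star x * (q t * q t)), ← hP1 t]
    rw [mul_assoc (p t * p t), ← mul_assoc (1 + t ^ 2 • k), hcomm' t,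
      mul_assoc (star x), hQ2 t, mul_one]
  refine ⟨fun t => !![p t, -(t • (p t * star x)); t • (q t * x), q t], ?_, ?_, ?_, ?_⟩
  · apply Continuous.continuousOn
    apply continuous_matrix
    have hpc : Continuous p := invSqrtAux_continuous hksa hk0
    have hqc : Continuous q := invSqrtAux_continuous hhsa hh0
    intro i j
    fin_cases i <;> fin_cases j <;> simp only [Matrix.cons_val', Matrix.cons_val_zero,
      Matrix.cons_val_one, Matrix.head_cons, Matrix.empty_val', Matrix.cons_val_fin_one,
      Matrix.head_fin_const, Matrix.of_apply, Fin.isValue]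
    · exact hpc
    · exact (continuous_id.smul (hpc.mul continuous_const)).neg
    · exact continuous_id.smul (hqc.mul continuous_const)
    · exact hqc
  · simp only [invSqrtAux_zero hksa, invSqrtAux_zero hhsa, hpdef, hqdef, zero_smul,
      neg_zero, Matrix.one_fin_two]
  · intro t _
    have hstarv : star (!![p t, -(t • (p t * star x)); t • (q t * x), q t])
        = !![p t, t • (star x * q t); -(t • (x * p t)), q t] := by
      ext i j
      fin_cases i <;> fin_cases j <;>
        simp [Matrix.star_apply, star_smul, star_mul, (hpsa t).star_eq, (hqsa t).star_eq]
    constructor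
    · rw [hstarv, Matrix.mul_fin_two, Matrix.one_fin_two]
      ext i j
      fin_cases i <;> fin_cases j <;>
        simp only [Fin.zero_eta, Fin.mk_one, Matrix.cons_val', Matrix.cons_val_zero,
          Matrix.cons_val_one, Matrix.head_cons, Matrix.empty_val', Matrix.cons_val_fin_one,
          Matrix.head_fin_const, Matrix.of_apply, smul_mul_assoc, mul_smul_comm, smul_smul, mul_neg, neg_mul,
          neg_neg, smul_neg]
      · -- G1
        have e : star x * q t * (q t * x) = p t * p t * k := by
          calc star x * q t * (q t * x) = star x * (q t * q t) * x := by noncomm_ring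
            _ = p t * p t * star x * x := by rw [hxPstar t]
            _ = p t * p t * k := by rw [hkdef, mul_assoc]
        have h1 := hP1 t
        rw [mul_add, mul_one, mul_smul_comm, pow_two] at h1
        rw [e]; exact h1
      · -- G2
        have e : star x * q t * q t = p t * (p t * star x) := by
          rw [mul_assoc, hxPstar t, mul_assoc]
        rw [e, neg_add_cancel]
      · -- G3
        have e : q t * (q t * x) = x * p t * p t := by
          rw [← mul_assoc, ← hxP t, ← mul_assoc]
        rw [e, neg_add_cancel]
      · -- G4
        have e : x * p t * (p t * star x) = q t * q t * h := by
          calc x * p t * (p t * star x) = x * (p t * p t) * star x := by noncomm_ring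
            _ = q t * q t * x * star x := by rw [hxP t]
            _ = q t * q t * h := by rw [hhdef, mul_assoc]
        have h1 := hQ1 t
        rw [mul_add, mul_one, mul_smul_comm, pow_two] at h1
        rw [e, add_comm]; exact h1
    · rw [hstarv, Matrix.mul_fin_two, Matrix.one_fin_two]
      ext i j
      fin_cases i <;> fin_cases j <;>
        simp only [Fin.zero_eta, Fin.mk_one, Matrix.cons_val', Matrix.cons_val_zero,
          Matrix.cons_val_one, Matrix.head_cons, Matrix.empty_val', Matrix.cons_val_fin_one,
          Matrix.head_fin_const, Matrix.of_apply, smul_mul_assoc, mul_smul_comm, smul_smul, mul_neg, neg_mul,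
          neg_neg, smul_neg]
      · -- G5
        have e : p t * star x * (x * p t) = k * (p t * p t) := by
          calc p t * star x * (x * p t) = p t * k * p t := by rw [hkdef]; noncomm_ring
            _ = k * (p t * p t) := by rw [hpk t, mul_assoc]
        have h1 := hP2 t
        rw [add_mul, one_mul, smul_mul_assoc, pow_two] at h1
        rw [e]; exact h1
      · -- G6
        rw [← mul_assoc (p t) (star x) (q t), add_neg_cancel]
      · -- G7
        rw [← mul_assoc (q t) x (p t), add_neg_cancel]
      · -- G8
        have e : q t * x * (star x * q t) = h * (q t * q t) := by
          calc q t * x * (star x * q t) = q t * h * q t := by rw [hhdef]; noncomm_ring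
            _ = h * (q t * q t) := by rw [hqh t, mul_assoc]
        have h1 := hQ2 t
        rw [add_mul, one_mul, smul_mul_assoc, pow_two] at h1
        rw [e, add_comm]; exact h1
  · -- norm estimate
    have hxu : x * ↑u = -(a 1 0) := by
      rw [hxdef, neg_mul, mul_assoc, Units.inv_mul, mul_one]
    have e1 : ((fun t : ℝ => !![p t, -(t • (p t * star x)); t • (q t * x), q t]) 1 * a) 1 0
        = q 1 * x * (a 0 0 - ↑u) := by
      simp only [Matrix.mul_apply, Fin.sum_univ_two, Matrix.cons_val', Matrix.cons_val_zero,
        Matrix.cons_val_one, Matrix.head_cons, Matrix.empty_val', Matrix.cons_val_fin_one,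
        Matrix.head_fin_const, Matrix.of_apply, one_smul]
      rw [mul_sub, mul_assoc (q 1) x (↑u : A), hxu]; noncomm_ring
    rw [e1]
    calc ‖q 1 * x * (a 0 0 - ↑u)‖ ≤ ‖q 1 * x‖ * ‖a 0 0 - ↑u‖ := norm_mul_le _ _
      _ ≤ 1 * ‖a 0 0 - ↑u‖ :=
        mul_le_mul_of_nonneg_right (invSqrtAux_norm_mul_le x) (norm_nonneg _)
      _ = ‖a 0 0 - ↑u‖ := one_mul _
      _ < ε := hab
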